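/- arXiv:1503.01585 — 2 statements merged into one kernel-verified Lean document; each statement's English description precedes it below -/
import Mathlib

section
/- Let 𝔸_V = (A, V, ψ_V, σ_V) and 𝔸_W = (A, W, ψ_W, σ_W) be two quadruples with common monoid A and let Δ : V⊗W → V⊗W be a link morphism between them. Then the morphism ψ_{V⊗W} = (ψ_V⊗W)∘(V⊗ψ_W)∘(Δ⊗A) : (V⊗W)⊗A → A⊗(V⊗W) satisfies the compatibility condition (μ_A⊗(V⊗W))∘(A⊗ψ_{V⊗W})∘(ψ_{V⊗W}⊗A) = ψ_{V⊗W}∘((V⊗W)⊗μ_A). -/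
open CategoryTheory MonoidalCategory

namespace IteratedWCP

universe v u

variable {C : Type u} [Category.{v} C] [MonoidalCategory C]

/-- The monoid (algebra) axioms for `(A, η, μ)`. -/
def IsMonoid {A : C} (η : 𝟙_ C ⟶ A) (μ : A ⊗ A ⟶ A) : Prop :=
  (η ▷ A) ≫ μ = (λ_ A).hom ∧ (A ◁ η) ≫ μ = (ρ_ A).hom ∧
    (μ ▷ A) ≫ μ = (α_ A A A).hom ≫ (A ◁ μ) ≫ μ

/-- The compatibility condition
`(μ_A ⊗ V) ∘ (A ⊗ ψ) ∘ (ψ ⊗ A) = ψ ∘ (V ⊗ μ_A)`. -/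
def Compat {A V : C} (μ : A ⊗ A ⟶ A) (ψ : V ⊗ A ⟶ A ⊗ V) : Prop :=
  (ψ ▷ A) ≫ (α_ A V A).hom ≫ (A ◁ ψ) ≫ (α_ A A V).inv ≫ (μ ▷ V)
    = (α_ V A A).hom ≫ (V ◁ μ) ≫ ψ

/-- The idempotent `∇_{A⊗V} = (μ_A ⊗ V) ∘ (A ⊗ ψ) ∘ (A ⊗ V ⊗ η_A)`. -/
def nabla {A V : C} (η : 𝟙_ C ⟶ A) (μ : A ⊗ A ⟶ A) (ψ : V ⊗ A ⟶ A ⊗ V) :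
    A ⊗ V ⟶ A ⊗ V :=
  (ρ_ (A ⊗ V)).inv ≫ ((A ⊗ V) ◁ η) ≫ (α_ A V A).hom ≫ (A ◁ ψ) ≫
    (α_ A A V).inv ≫ (μ ▷ V)

/-- The twisted condition
`(μ_A ⊗ V) ∘ (A ⊗ ψ) ∘ (σ ⊗ A) = (μ_A ⊗ V) ∘ (A ⊗ σ) ∘ (ψ ⊗ V) ∘ (V ⊗ ψ)`. -/
def Twisted {A V : C} (μ : A ⊗ A ⟶ A) (ψ : V ⊗ A ⟶ A ⊗ V)
    (σ : V ⊗ V ⟶ A ⊗ V) : Prop :=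
  (σ ▷ A) ≫ (α_ A V A).hom ≫ (A ◁ ψ) ≫ (α_ A A V).inv ≫ (μ ▷ V)
    = (α_ V V A).hom ≫ (V ◁ ψ) ≫ (α_ V A V).inv ≫ (ψ ▷ V) ≫ (α_ A V V).hom ≫
        (A ◁ σ) ≫ (α_ A A V).inv ≫ (μ ▷ V)

/-- The cocycle condition
`(μ_A ⊗ V) ∘ (A ⊗ σ) ∘ (σ ⊗ V) = (μ_A ⊗ V) ∘ (A ⊗ σ) ∘ (ψ ⊗ V) ∘ (V ⊗ σ)`. -/
def Cocycle {A V : C} (μ : A ⊗ A ⟶ A) (ψ : V ⊗ A ⟶ A ⊗ V)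
    (σ : V ⊗ V ⟶ A ⊗ V) : Prop :=
  (σ ▷ V) ≫ (α_ A V V).hom ≫ (A ◁ σ) ≫ (α_ A A V).inv ≫ (μ ▷ V)
    = (α_ V V V).hom ≫ (V ◁ σ) ≫ (α_ V A V).inv ≫ (ψ ▷ V) ≫ (α_ A V V).hom ≫
        (A ◁ σ) ≫ (α_ A A V).inv ≫ (μ ▷ V)

/-- Normalization : `∇_{A⊗V} ∘ σ = σ`. -/
def Normalized {A V : C} (η : 𝟙_ C ⟶ A) (μ : A ⊗ A ⟶ A) (ψ : V ⊗ A ⟶ A ⊗ V)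
    (σ : V ⊗ V ⟶ A ⊗ V) : Prop :=
  σ ≫ nabla η μ ψ = σ

/-- `(ψ_V ⊗ W) ∘ (V ⊗ ψ_W) : (V ⊗ W) ⊗ A ⟶ A ⊗ (V ⊗ W)`. -/
def psi2 {A V W : C} (ψV : V ⊗ A ⟶ A ⊗ V) (ψW : W ⊗ A ⟶ A ⊗ W) :
    (V ⊗ W) ⊗ A ⟶ A ⊗ (V ⊗ W) :=
  (α_ V W A).hom ≫ (V ◁ ψW) ≫ (α_ V A W).inv ≫ (ψV ▷ W) ≫ (α_ A V W).hom

/-- `ψ_{V⊗W} = (ψ_V ⊗ W) ∘ (V ⊗ ψ_W) ∘ (Δ ⊗ A)`. -/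
def psiVW {A V W : C} (ψV : V ⊗ A ⟶ A ⊗ V) (ψW : W ⊗ A ⟶ A ⊗ W)
    (Δ : V ⊗ W ⟶ V ⊗ W) : (V ⊗ W) ⊗ A ⟶ A ⊗ (V ⊗ W) :=
  (Δ ▷ A) ≫ psi2 ψV ψW

/-- `Δ` is a link morphism:
`ψ_{V⊗W} = (A ⊗ Δ) ∘ ψ_{V⊗W}` and `ψ_{V⊗W} = ∇_{A⊗V⊗W} ∘ (ψ_V ⊗ W) ∘ (V ⊗ ψ_W)`. -/
def IsLink {A V W : C} (η : 𝟙_ C ⟶ A) (μ : A ⊗ A ⟶ A)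
    (ψV : V ⊗ A ⟶ A ⊗ V) (ψW : W ⊗ A ⟶ A ⊗ W) (Δ : V ⊗ W ⟶ V ⊗ W) : Prop :=
  psiVW ψV ψW Δ = psiVW ψV ψW Δ ≫ (A ◁ Δ) ∧
  psiVW ψV ψW Δ = psi2 ψV ψW ≫ nabla η μ (psiVW ψV ψW Δ)

/-- The final multiplication step `(μ_A ⊗ V ⊗ W)` on `A ⊗ ((A ⊗ V) ⊗ W)`. -/
def muPart (V W : C) {A : C} (μ : A ⊗ A ⟶ A) :
    A ⊗ ((A ⊗ V) ⊗ W) ⟶ A ⊗ (V ⊗ W) :=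
  (A ◁ (α_ A V W).hom) ≫ (α_ A A (V ⊗ W)).inv ≫ (μ ▷ (V ⊗ W))

/-- Condition (i) of the definition of a twisting morphism:
`(ψ_V ⊗ W) ∘ (V ⊗ ψ_W) ∘ (τ ⊗ A) = (A ⊗ τ) ∘ (ψ_W ⊗ V) ∘ (W ⊗ ψ_V)`. -/
def TwistI {A V W : C} (ψV : V ⊗ A ⟶ A ⊗ V) (ψW : W ⊗ A ⟶ A ⊗ W)
    (τ : W ⊗ V ⟶ V ⊗ W) : Prop :=
  (τ ▷ A) ≫ psi2 ψV ψW
    = (α_ W V A).hom ≫ (W ◁ ψV) ≫ (α_ W A V).inv ≫ (ψW ▷ V) ≫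
        (α_ A W V).hom ≫ (A ◁ τ)

/-- Condition (ii) of the definition of a twisting morphism. -/
def TwistII {A V W : C} (μ : A ⊗ A ⟶ A) (ψV : V ⊗ A ⟶ A ⊗ V)
    (σV : V ⊗ V ⟶ A ⊗ V) (ψW : W ⊗ A ⟶ A ⊗ W) (σW : W ⊗ W ⟶ A ⊗ W)
    (τ : W ⊗ V ⟶ V ⊗ W) : Prop :=
  ((τ ▷ W) ▷ V) ≫ ((α_ V W W).hom ▷ V) ≫ ((V ◁ σW) ▷ V) ≫
      ((α_ V A W).inv ▷ V) ≫ (α_ (V ⊗ A) W V).hom ≫ (ψV ⊗ₘ τ) ≫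
      (α_ A V (V ⊗ W)).hom ≫ (A ◁ (α_ V V W).inv) ≫ (A ◁ (σV ▷ W)) ≫ muPart V W μ
    = (α_ (W ⊗ V) W V).hom ≫ ((W ⊗ V) ◁ τ) ≫ (α_ W V (V ⊗ W)).hom ≫
        (W ◁ (α_ V V W).inv) ≫ (W ◁ (σV ▷ W)) ≫ (W ◁ (α_ A V W).hom) ≫
        (α_ W A (V ⊗ W)).inv ≫ (ψW ▷ (V ⊗ W)) ≫ (α_ A W (V ⊗ W)).hom ≫
        (A ◁ (α_ W V W).inv) ≫ (A ◁ (τ ▷ W)) ≫ (A ◁ (α_ V W W).hom) ≫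
        (A ◁ (V ◁ σW)) ≫ (A ◁ (α_ V A W).inv) ≫ (A ◁ (ψV ▷ W)) ≫ muPart V W μ

/-- `σ_{V⊗W} = (μ_A ⊗ V ⊗ W) ∘ (A ⊗ ψ_V ⊗ W) ∘ (σ_V ⊗ σ_W) ∘ (V ⊗ τ ⊗ W)`. -/
def sigmaVW {A V W : C} (μ : A ⊗ A ⟶ A) (ψV : V ⊗ A ⟶ A ⊗ V)
    (σV : V ⊗ V ⟶ A ⊗ V) (σW : W ⊗ W ⟶ A ⊗ W) (τ : W ⊗ V ⟶ V ⊗ W) :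
    (V ⊗ W) ⊗ (V ⊗ W) ⟶ A ⊗ (V ⊗ W) :=
  (α_ V W (V ⊗ W)).hom ≫ (V ◁ (α_ W V W).inv) ≫ (V ◁ (τ ▷ W)) ≫
    (V ◁ (α_ V W W).hom) ≫ (α_ V V (W ⊗ W)).inv ≫ (σV ⊗ₘ σW) ≫
    (α_ A V (A ⊗ W)).hom ≫ (A ◁ (α_ V A W).inv) ≫ (A ◁ (ψV ▷ W)) ≫ muPart V W μ

/-- The three σ-compatibility conditions for `σ_{V⊗W}` and a link morphism `Δ`. -/
def SigmaCompat {A V W : C} (Δ : V ⊗ W ⟶ V ⊗ W)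
    (σ : (V ⊗ W) ⊗ (V ⊗ W) ⟶ A ⊗ (V ⊗ W)) : Prop :=
  σ = (Δ ▷ (V ⊗ W)) ≫ σ ∧ σ = ((V ⊗ W) ◁ Δ) ≫ σ ∧ σ = σ ≫ (A ◁ Δ)

/-- The weak crossed product multiplication
`μ_{A⊗V} = (μ_A ⊗ V) ∘ (μ_A ⊗ σ) ∘ (A ⊗ ψ ⊗ V)`. -/
def wmul {A V : C} (μ : A ⊗ A ⟶ A) (ψ : V ⊗ A ⟶ A ⊗ V) (σ : V ⊗ V ⟶ A ⊗ V) :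
    (A ⊗ V) ⊗ (A ⊗ V) ⟶ A ⊗ V :=
  (α_ A V (A ⊗ V)).hom ≫ (A ◁ (α_ V A V).inv) ≫ (A ◁ (ψ ▷ V)) ≫
    (A ◁ (α_ A V V).hom) ≫ (α_ A A (V ⊗ V)).inv ≫ (μ ⊗ₘ σ) ≫
    (α_ A A V).inv ≫ (μ ▷ V)

/-- `β_ν = (μ_A ⊗ V) ∘ (A ⊗ ν)`. -/
def beta {A V : C} (μ : A ⊗ A ⟶ A) (ν : 𝟙_ C ⟶ A ⊗ V) : A ⟶ A ⊗ V :=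
  (ρ_ A).inv ≫ (A ◁ ν) ≫ (α_ A A V).inv ≫ (μ ▷ V)

/-- Preunit equation (1):
`(μ_A ⊗ V) ∘ (A ⊗ σ) ∘ (ψ ⊗ V) ∘ (V ⊗ ν) = ∇_{A⊗V} ∘ (η_A ⊗ V)`. -/
def PreEq1 {A V : C} (η : 𝟙_ C ⟶ A) (μ : A ⊗ A ⟶ A) (ψ : V ⊗ A ⟶ A ⊗ V)
    (σ : V ⊗ V ⟶ A ⊗ V) (ν : 𝟙_ C ⟶ A ⊗ V) : Prop :=
  (ρ_ V).inv ≫ (V ◁ ν) ≫ (α_ V A V).inv ≫ (ψ ▷ V) ≫ (α_ A V V).hom ≫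
      (A ◁ σ) ≫ (α_ A A V).inv ≫ (μ ▷ V)
    = (λ_ V).inv ≫ (η ▷ V) ≫ nabla η μ ψ

/-- Preunit equation (2):
`(μ_A ⊗ V) ∘ (A ⊗ σ) ∘ (ν ⊗ V) = ∇_{A⊗V} ∘ (η_A ⊗ V)`. -/
def PreEq2 {A V : C} (η : 𝟙_ C ⟶ A) (μ : A ⊗ A ⟶ A) (ψ : V ⊗ A ⟶ A ⊗ V)
    (σ : V ⊗ V ⟶ A ⊗ V) (ν : 𝟙_ C ⟶ A ⊗ V) : Prop :=
  (λ_ V).inv ≫ (ν ▷ V) ≫ (α_ A V V).hom ≫ (A ◁ σ) ≫ (α_ A A V).inv ≫ (μ ▷ V)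
    = (λ_ V).inv ≫ (η ▷ V) ≫ nabla η μ ψ

/-- Preunit equation (3):
`(μ_A ⊗ V) ∘ (A ⊗ ψ) ∘ (ν ⊗ A) = β_ν`. -/
def PreEq3 {A V : C} (μ : A ⊗ A ⟶ A) (ψ : V ⊗ A ⟶ A ⊗ V)
    (ν : 𝟙_ C ⟶ A ⊗ V) : Prop :=
  (λ_ A).inv ≫ (ν ▷ A) ≫ (α_ A V A).hom ≫ (A ◁ ψ) ≫ (α_ A A V).inv ≫ (μ ▷ V)
    = beta μ ν

/-- `ν` is a preunit for the associative product `m` :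
`m ∘ (X ⊗ ν) = m ∘ (ν ⊗ X) = m ∘ (X ⊗ (m ∘ (ν ⊗ ν)))`. -/
def IsPreunit {X : C} (m : X ⊗ X ⟶ X) (ν : 𝟙_ C ⟶ X) : Prop :=
  (ρ_ X).inv ≫ (X ◁ ν) ≫ m = (λ_ X).inv ≫ (ν ▷ X) ≫ m ∧
  (λ_ X).inv ≫ (ν ▷ X) ≫ m
    = (ρ_ X).inv ≫ (X ◁ ((λ_ (𝟙_ C)).inv ≫ (ν ⊗ₘ ν) ≫ m)) ≫ m

/-- `ν_{V⊗W} = ∇_{A⊗V⊗W} ∘ (μ_A ⊗ V ⊗ W) ∘ (A ⊗ ψ_V ⊗ W) ∘ (ν_V ⊗ ν_W)`. -/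
def nuVW {A V W : C} (η : 𝟙_ C ⟶ A) (μ : A ⊗ A ⟶ A) (ψV : V ⊗ A ⟶ A ⊗ V)
    (ψW : W ⊗ A ⟶ A ⊗ W) (Δ : V ⊗ W ⟶ V ⊗ W)
    (νV : 𝟙_ C ⟶ A ⊗ V) (νW : 𝟙_ C ⟶ A ⊗ W) : 𝟙_ C ⟶ A ⊗ (V ⊗ W) :=
  (λ_ (𝟙_ C)).inv ≫ (νV ⊗ₘ νW) ≫ (α_ A V (A ⊗ W)).hom ≫ (A ◁ (α_ V A W).inv) ≫
    (A ◁ (ψV ▷ W)) ≫ muPart V W μ ≫ nabla η μ (psiVW ψV ψW Δ)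

/-- Iterated preunit condition (pre-1):
`(μ_A⊗V⊗W)∘(A⊗σ_V⊗W)∘(ψ_V⊗τ)∘(V⊗ψ_W⊗V)∘(Δ⊗ν_V) = ∇_{A⊗V⊗W}∘(η_A⊗V⊗W)`. -/
def IterPre1 {A V W : C} (η : 𝟙_ C ⟶ A) (μ : A ⊗ A ⟶ A)
    (ψV : V ⊗ A ⟶ A ⊗ V) (σV : V ⊗ V ⟶ A ⊗ V) (ψW : W ⊗ A ⟶ A ⊗ W)
    (τ : W ⊗ V ⟶ V ⊗ W) (Δ : V ⊗ W ⟶ V ⊗ W) (νV : 𝟙_ C ⟶ A ⊗ V) : Prop :=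
  (ρ_ (V ⊗ W)).inv ≫ (Δ ⊗ₘ νV) ≫ (α_ V W (A ⊗ V)).hom ≫ (V ◁ (α_ W A V).inv) ≫
      (V ◁ (ψW ▷ V)) ≫ (V ◁ (α_ A W V).hom) ≫ (α_ V A (W ⊗ V)).inv ≫ (ψV ⊗ₘ τ) ≫
      (α_ A V (V ⊗ W)).hom ≫ (A ◁ (α_ V V W).inv) ≫ (A ◁ (σV ▷ W)) ≫ muPart V W μ
    = (λ_ (V ⊗ W)).inv ≫ (η ▷ (V ⊗ W)) ≫ nabla η μ (psiVW ψV ψW Δ)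

/-- Iterated preunit condition (pre-2):
`(μ_A⊗V⊗W)∘(A⊗ψ_V⊗W)∘(A⊗V⊗σ_W)∘(A⊗τ⊗W)∘(ν_W⊗V⊗W) = ∇_{A⊗V⊗W}∘(η_A⊗V⊗W)`. -/
def IterPre2 {A V W : C} (η : 𝟙_ C ⟶ A) (μ : A ⊗ A ⟶ A)
    (ψV : V ⊗ A ⟶ A ⊗ V) (ψW : W ⊗ A ⟶ A ⊗ W) (σW : W ⊗ W ⟶ A ⊗ W)
    (τ : W ⊗ V ⟶ V ⊗ W) (Δ : V ⊗ W ⟶ V ⊗ W) (νW : 𝟙_ C ⟶ A ⊗ W) : Prop :=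
  (λ_ (V ⊗ W)).inv ≫ (νW ▷ (V ⊗ W)) ≫ (α_ A W (V ⊗ W)).hom ≫
      (A ◁ (α_ W V W).inv) ≫ (A ◁ (τ ▷ W)) ≫ (A ◁ (α_ V W W).hom) ≫
      (A ◁ (V ◁ σW)) ≫ (A ◁ (α_ V A W).inv) ≫ (A ◁ (ψV ▷ W)) ≫ muPart V W μ
    = (λ_ (V ⊗ W)).inv ≫ (η ▷ (V ⊗ W)) ≫ nabla η μ (psiVW ψV ψW Δ)

/-- `i_{A×V} = p_{A⊗V⊗W} ∘ (μ_A⊗V⊗W) ∘ (A⊗ψ_V⊗W) ∘ (i_{A⊗V} ⊗ ν_W)`. -/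
def iAV {A V W X Z : C} (μ : A ⊗ A ⟶ A) (ψV : V ⊗ A ⟶ A ⊗ V)
    (νW : 𝟙_ C ⟶ A ⊗ W) (iX : X ⟶ A ⊗ V) (p2 : A ⊗ (V ⊗ W) ⟶ Z) : X ⟶ Z :=
  (ρ_ X).inv ≫ (iX ⊗ₘ νW) ≫ (α_ A V (A ⊗ W)).hom ≫ (A ◁ (α_ V A W).inv) ≫
    (A ◁ (ψV ▷ W)) ≫ muPart V W μ ≫ p2

/-- `i_W = p_{A⊗V⊗W} ∘ (ν_V ⊗ W)`. -/
def iWmor {A V W Z : C} (νV : 𝟙_ C ⟶ A ⊗ V) (p2 : A ⊗ (V ⊗ W) ⟶ Z) : W ⟶ Z :=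
  (λ_ W).inv ≫ (νV ▷ W) ≫ (α_ A V W).hom ≫ p2

/-- `∇_{(A×V)⊗W} = (p_{A⊗V} ⊗ W) ∘ ∇_{A⊗V⊗W} ∘ (i_{A⊗V} ⊗ W)`. -/
def nabPrime {A V W X : C} (η : 𝟙_ C ⟶ A) (μ : A ⊗ A ⟶ A)
    (ψV : V ⊗ A ⟶ A ⊗ V) (ψW : W ⊗ A ⟶ A ⊗ W) (Δ : V ⊗ W ⟶ V ⊗ W)
    (iX : X ⟶ A ⊗ V) (pX : A ⊗ V ⟶ X) : X ⊗ W ⟶ X ⊗ W :=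
  (iX ▷ W) ≫ (α_ A V W).hom ≫ nabla η μ (psiVW ψV ψW Δ) ≫
    (α_ A V W).inv ≫ (pX ▷ W)

/-- Equality (new-it-1). -/
def NewIt1 {A V W : C} (η : 𝟙_ C ⟶ A) (μ : A ⊗ A ⟶ A)
    (ψV : V ⊗ A ⟶ A ⊗ V) (σV : V ⊗ V ⟶ A ⊗ V) (ψW : W ⊗ A ⟶ A ⊗ W)
    (τ : W ⊗ V ⟶ V ⊗ W) (Δ : V ⊗ W ⟶ V ⊗ W) (νW : 𝟙_ C ⟶ A ⊗ W) : Prop :=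
  (ρ_ (V ⊗ V)).inv ≫ ((V ⊗ V) ◁ νW) ≫ (α_ (V ⊗ V) A W).inv ≫
      (((σV ▷ A) ≫ (α_ A V A).hom ≫ (A ◁ ψV) ≫ (α_ A A V).inv ≫ (μ ▷ V)) ▷ W) ≫
      (α_ A V W).hom ≫ nabla η μ (psiVW ψV ψW Δ)
    = ((ρ_ V).inv ▷ V) ≫ ((V ◁ νW) ▷ V) ≫ ((α_ V A W).inv ▷ V) ≫
        (α_ (V ⊗ A) W V).hom ≫ (ψV ⊗ₘ τ) ≫ (α_ A V (V ⊗ W)).hom ≫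
        (A ◁ (α_ V V W).inv) ≫ (A ◁ (σV ▷ W)) ≫ muPart V W μ ≫
        nabla η μ (psiVW ψV ψW Δ)

/-- Equality (new-it-2). -/
def NewIt2 {A V W : C} (η : 𝟙_ C ⟶ A) (μ : A ⊗ A ⟶ A)
    (ψV : V ⊗ A ⟶ A ⊗ V) (σV : V ⊗ V ⟶ A ⊗ V) (ψW : W ⊗ A ⟶ A ⊗ W)
    (Δ : V ⊗ W ⟶ V ⊗ W) : Prop :=
  (σV ▷ W) ≫ (α_ A V W).hom ≫ nabla η μ (psiVW ψV ψW Δ)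
    = (α_ V V W).hom ≫ (V ◁ Δ) ≫ (ρ_ (V ⊗ (V ⊗ W))).inv ≫
        ((V ⊗ (V ⊗ W)) ◁ η) ≫ (α_ V (V ⊗ W) A).hom ≫ (V ◁ (α_ V W A).hom) ≫
        (α_ V V (W ⊗ A)).inv ≫ (σV ⊗ₘ ψW) ≫ (α_ A V (A ⊗ W)).hom ≫
        (A ◁ (α_ V A W).inv) ≫ (A ◁ (ψV ▷ W)) ≫ muPart V W μ

/-- Equality (new-it-3). -/
def NewIt3 {A V W : C} (η : 𝟙_ C ⟶ A) (μ : A ⊗ A ⟶ A)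
    (ψV : V ⊗ A ⟶ A ⊗ V) (ψW : W ⊗ A ⟶ A ⊗ W) (σW : W ⊗ W ⟶ A ⊗ W)
    (Δ : V ⊗ W ⟶ V ⊗ W) : Prop :=
  (V ◁ σW) ≫ (α_ V A W).inv ≫ (ψV ▷ W) ≫ (α_ A V W).hom ≫
      nabla η μ (psiVW ψV ψW Δ)
    = (α_ V W W).inv ≫ (Δ ▷ W) ≫ (α_ V W W).hom ≫ (V ◁ σW) ≫
        (α_ V A W).inv ≫ (ψV ▷ W) ≫ (α_ A V W).hom

/-- A weak distributive law of the monoid `S` over the monoid `T`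
(`lam : T ⊗ S ⟶ S ⊗ T`). -/
def WDL {T S : C} (ηT : 𝟙_ C ⟶ T) (μT : T ⊗ T ⟶ T) (ηS : 𝟙_ C ⟶ S)
    (μS : S ⊗ S ⟶ S) (lam : T ⊗ S ⟶ S ⊗ T) : Prop :=
  ((μT ▷ S) ≫ lam
      = (α_ T T S).hom ≫ (T ◁ lam) ≫ (α_ T S T).inv ≫ (lam ▷ T) ≫
          (α_ S T T).hom ≫ (S ◁ μT)) ∧
  ((T ◁ μS) ≫ lam
      = (α_ T S S).inv ≫ (lam ▷ S) ≫ (α_ S T S).hom ≫ (S ◁ lam) ≫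
          (α_ S S T).inv ≫ (μS ▷ T)) ∧
  ((((λ_ S).inv ≫ (ηT ▷ S) ≫ lam) ▷ T) ≫ (α_ S T T).hom ≫ (S ◁ μT)
      = (S ◁ ((ρ_ T).inv ≫ (T ◁ ηS) ≫ lam)) ≫ (α_ S S T).inv ≫ (μS ▷ T))

/-- The Yang–Baxter relation
`(S⊗λ2)∘(λ3⊗T)∘(D⊗λ1) = (λ1⊗D)∘(T⊗λ3)∘(λ2⊗S)`. -/
def YB {S T D : C} (l1 : T ⊗ S ⟶ S ⊗ T) (l2 : D ⊗ T ⟶ T ⊗ D)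
    (l3 : D ⊗ S ⟶ S ⊗ D) : Prop :=
  (α_ D T S).hom ≫ (D ◁ l1) ≫ (α_ D S T).inv ≫ (l3 ▷ T) ≫
      (α_ S D T).hom ≫ (S ◁ l2)
    = (l2 ▷ S) ≫ (α_ T D S).hom ≫ (T ◁ l3) ≫ (α_ T S D).inv ≫
        (l1 ▷ D) ≫ (α_ S T D).hom

/-- `σ_T = (S ⊗ μ_T) ∘ ((λ ∘ (T ⊗ η_S)) ⊗ T)`. -/
def sigWDL {S T : C} (ηS : 𝟙_ C ⟶ S) (μT : T ⊗ T ⟶ T)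
    (lam : T ⊗ S ⟶ S ⊗ T) : T ⊗ T ⟶ S ⊗ T :=
  (((ρ_ T).inv ≫ (T ◁ ηS) ≫ lam) ▷ T) ≫ (α_ S T T).hom ≫ (S ◁ μT)

/-- `∇_{S⊗T} = (μ_S ⊗ T) ∘ (S ⊗ (λ ∘ (T ⊗ η_S)))`. -/
def nabWDL {S T : C} (ηS : 𝟙_ C ⟶ S) (μS : S ⊗ S ⟶ S)
    (lam : T ⊗ S ⟶ S ⊗ T) : S ⊗ T ⟶ S ⊗ T :=
  (S ◁ ((ρ_ T).inv ≫ (T ◁ ηS) ≫ lam)) ≫ (α_ S S T).inv ≫ (μS ▷ T)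



set_option maxHeartbeats 1000000 in
lemma compat_psi2 {A V W : C} {μ : A ⊗ A ⟶ A} {ψV : V ⊗ A ⟶ A ⊗ V}
    {ψW : W ⊗ A ⟶ A ⊗ W} (hψV : Compat μ ψV) (hψW : Compat μ ψW) :
    Compat μ (psi2 ψV ψW) := by
  replace hψV : (ψV ▷ A) ≫ (α_ A V A).hom ≫ (A ◁ ψV) ≫ (α_ A A V).inv ≫ (μ ▷ V)
      = (α_ V A A).hom ≫ (V ◁ μ) ≫ ψV := hψV
  replace hψW : (ψW ▷ A) ≫ (α_ A W A).hom ≫ (A ◁ ψW) ≫ (α_ A A W).inv ≫ (μ ▷ W)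
      = (α_ W A A).hom ≫ (W ◁ μ) ≫ ψW := hψW
  show ((psi2 ψV ψW) ▷ A) ≫ (α_ A (V ⊗ W) A).hom ≫ (A ◁ (psi2 ψV ψW)) ≫
      (α_ A A (V ⊗ W)).inv ≫ (μ ▷ (V ⊗ W))
    = (α_ (V ⊗ W) A A).hom ≫ ((V ⊗ W) ◁ μ) ≫ (psi2 ψV ψW)
  unfold psi2
  calc _ = 𝟙 (((V ⊗ W) ⊗ A) ⊗ A) ⊗≫ (V ◁ (ψW ▷ A)) ⊗≫
        ((ψV ▷ (W ⊗ A)) ≫ ((A ⊗ V) ◁ ψW)) ⊗≫ (A ◁ (ψV ▷ W)) ⊗≫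
        (μ ▷ (V ⊗ W)) := by monoidal
    _ = 𝟙 (((V ⊗ W) ⊗ A) ⊗ A) ⊗≫ (V ◁ (ψW ▷ A)) ⊗≫
        (((V ⊗ A) ◁ ψW) ≫ (ψV ▷ (A ⊗ W))) ⊗≫ (A ◁ (ψV ▷ W)) ⊗≫
        (μ ▷ (V ⊗ W)) := by rw [← whisker_exchange]
    _ = 𝟙 (((V ⊗ W) ⊗ A) ⊗ A) ⊗≫ (V ◁ (ψW ▷ A)) ⊗≫ (V ◁ (A ◁ ψW)) ⊗≫
        (((ψV ▷ A) ≫ (α_ A V A).hom ≫ (A ◁ ψV) ≫ (α_ A A V).inv ≫ (μ ▷ V)) ▷ W) ⊗≫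
        𝟙 (A ⊗ (V ⊗ W)) := by monoidal
    _ = 𝟙 (((V ⊗ W) ⊗ A) ⊗ A) ⊗≫ (V ◁ (ψW ▷ A)) ⊗≫ (V ◁ (A ◁ ψW)) ⊗≫
        (((α_ V A A).hom ≫ (V ◁ μ) ≫ ψV) ▷ W) ⊗≫ 𝟙 (A ⊗ (V ⊗ W)) := by rw [hψV]
    _ = 𝟙 (((V ⊗ W) ⊗ A) ⊗ A) ⊗≫
        (V ◁ ((ψW ▷ A) ≫ (α_ A W A).hom ≫ (A ◁ ψW) ≫ (α_ A A W).inv ≫ (μ ▷ W))) ⊗≫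
        (ψV ▷ W) ⊗≫ 𝟙 (A ⊗ (V ⊗ W)) := by monoidal
    _ = 𝟙 (((V ⊗ W) ⊗ A) ⊗ A) ⊗≫
        (V ◁ ((α_ W A A).hom ≫ (W ◁ μ) ≫ ψW)) ⊗≫
        (ψV ▷ W) ⊗≫ 𝟙 (A ⊗ (V ⊗ W)) := by rw [hψW]
    _ = _ := by monoidal

set_option maxHeartbeats 1000000 in
theorem statement0 {A V W : C} (η : 𝟙_ C ⟶ A) (μ : A ⊗ A ⟶ A)
    (ψV : V ⊗ A ⟶ A ⊗ V) (σV : V ⊗ V ⟶ A ⊗ V)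
    (ψW : W ⊗ A ⟶ A ⊗ W) (σW : W ⊗ W ⟶ A ⊗ W)
    (Δ : V ⊗ W ⟶ V ⊗ W)
    (hA : IsMonoid η μ) (hψV : Compat μ ψV) (hψW : Compat μ ψW)
    (hΔ : IsLink η μ ψV ψW Δ) :
    Compat μ (psiVW ψV ψW Δ) := by
  obtain ⟨l1, -⟩ := hΔ
  have hp : ((psi2 ψV ψW) ▷ A) ≫ (α_ A (V ⊗ W) A).hom ≫ (A ◁ (psi2 ψV ψW)) ≫
      (α_ A A (V ⊗ W)).inv ≫ (μ ▷ (V ⊗ W))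
      = (α_ (V ⊗ W) A A).hom ≫ ((V ⊗ W) ◁ μ) ≫ (psi2 ψV ψW) :=
    compat_psi2 hψV hψW
  replace l1 : (Δ ▷ A) ≫ psi2 ψV ψW ≫ (A ◁ Δ) = (Δ ▷ A) ≫ psi2 ψV ψW := by
    rw [← Category.assoc]; exact l1.symm
  show (((Δ ▷ A) ≫ psi2 ψV ψW) ▷ A) ≫ (α_ A (V ⊗ W) A).hom ≫
      (A ◁ ((Δ ▷ A) ≫ psi2 ψV ψW)) ≫ (α_ A A (V ⊗ W)).inv ≫ (μ ▷ (V ⊗ W))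
    = (α_ (V ⊗ W) A A).hom ≫ ((V ⊗ W) ◁ μ) ≫ ((Δ ▷ A) ≫ psi2 ψV ψW)
  calc _ = (((Δ ▷ A) ≫ psi2 ψV ψW ≫ (A ◁ Δ)) ▷ A) ≫ (α_ A (V ⊗ W) A).hom ≫
        (A ◁ psi2 ψV ψW) ≫ (α_ A A (V ⊗ W)).inv ≫ (μ ▷ (V ⊗ W)) := by monoidal
    _ = (((Δ ▷ A) ≫ psi2 ψV ψW) ▷ A) ≫ (α_ A (V ⊗ W) A).hom ≫
        (A ◁ psi2 ψV ψW) ≫ (α_ A A (V ⊗ W)).inv ≫ (μ ▷ (V ⊗ W)) := by rw [l1]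
    _ = ((Δ ▷ A) ▷ A) ≫ ((psi2 ψV ψW ▷ A) ≫ (α_ A (V ⊗ W) A).hom ≫
        (A ◁ psi2 ψV ψW) ≫ (α_ A A (V ⊗ W)).inv ≫ (μ ▷ (V ⊗ W))) := by
      simp only [comp_whiskerRight, Category.assoc]
    _ = ((Δ ▷ A) ▷ A) ≫ (α_ (V ⊗ W) A A).hom ≫ ((V ⊗ W) ◁ μ) ≫ psi2 ψV ψW := by
      rw [hp]
    _ = (α_ (V ⊗ W) A A).hom ≫ ((Δ ▷ (A ⊗ A)) ≫ ((V ⊗ W) ◁ μ)) ≫ psi2 ψV ψW := by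
      monoidal
    _ = (α_ (V ⊗ W) A A).hom ≫ (((V ⊗ W) ◁ μ) ≫ (Δ ▷ A)) ≫ psi2 ψV ψW := by
      rw [← whisker_exchange]
    _ = _ := by simp only [Category.assoc]


end IteratedWCP
end

section
/- Let 𝔸_V = (A, V, ψ_V, σ_V) and 𝔸_W = (A, W, ψ_W, σ_W) be two quadruples satisfying the twisted and cocycle conditions and normalized, with a link morphism Δ : V⊗W → V⊗W and a twisting morphism τ : W⊗V → V⊗W between them, and suppose σ_{V⊗W} satisfies the three σ-compatibility conditions. Then the quadruple 𝔸_{V⊗W} = (A, V⊗W, ψ_{V⊗W}, σ_{V⊗W}) is normalized: ∇_{A⊗V⊗W}∘σ_{V⊗W} = σ_{V⊗W}. -/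
open CategoryTheory MonoidalCategory

namespace IteratedWCP

universe v u

variable {C : Type u} [Category.{v} C] [MonoidalCategory C]

lemma nabla_eq {A V : C} (η : 𝟙_ C ⟶ A) (μ : A ⊗ A ⟶ A) (ψ : V ⊗ A ⟶ A ⊗ V) :
    nabla η μ ψ
      = (A ◁ ((ρ_ V).inv ≫ (V ◁ η) ≫ ψ)) ≫ (α_ A A V).inv ≫ (μ ▷ V) := by
  unfold nabla; simp only [MonoidalCategory.whiskerLeft_comp]; monoidal

lemma nabla_whisker {A V : C} (η : 𝟙_ C ⟶ A) (μ : A ⊗ A ⟶ A)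
    (ψ : V ⊗ A ⟶ A ⊗ V) (Δ : V ⟶ V) :
    nabla η μ ((Δ ▷ A) ≫ ψ) = (A ◁ Δ) ≫ nabla η μ ψ := by
  unfold nabla
  calc (ρ_ (A ⊗ V)).inv ≫ ((A ⊗ V) ◁ η) ≫ (α_ A V A).hom ≫ (A ◁ ((Δ ▷ A) ≫ ψ)) ≫
        (α_ A A V).inv ≫ (μ ▷ V)
      = (ρ_ (A ⊗ V)).inv ≫ ((A ⊗ V) ◁ η) ≫ ((A ◁ Δ) ▷ A) ≫ (α_ A V A).hom ≫ (A ◁ ψ) ≫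
        (α_ A A V).inv ≫ (μ ▷ V) := by
        simp only [MonoidalCategory.whiskerLeft_comp]; monoidal
    _ = (ρ_ (A ⊗ V)).inv ≫ ((A ◁ Δ) ▷ (𝟙_ C)) ≫ ((A ⊗ V) ◁ η) ≫ (α_ A V A).hom ≫ (A ◁ ψ) ≫
        (α_ A A V).inv ≫ (μ ▷ V) := by
        rw [← whisker_exchange_assoc]
    _ = (A ◁ Δ) ≫ (ρ_ (A ⊗ V)).inv ≫ ((A ⊗ V) ◁ η) ≫ (α_ A V A).hom ≫ (A ◁ ψ) ≫
        (α_ A A V).inv ≫ (μ ▷ V) := by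
        rw [← rightUnitor_inv_naturality_assoc]

lemma mu_nabla {A V : C} (η : 𝟙_ C ⟶ A) (μ : A ⊗ A ⟶ A) (ψ : V ⊗ A ⟶ A ⊗ V)
    (hassoc : (μ ▷ A) ≫ μ = (α_ A A A).hom ≫ (A ◁ μ) ≫ μ) :
    (α_ A A V).inv ≫ (μ ▷ V) ≫ nabla η μ ψ
      = (A ◁ nabla η μ ψ) ≫ (α_ A A V).inv ≫ (μ ▷ V) := by
  rw [nabla_eq]
  set φ : V ⟶ A ⊗ V := (ρ_ V).inv ≫ (V ◁ η) ≫ ψ with hφ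
  calc (α_ A A V).inv ≫ (μ ▷ V) ≫ ((A ◁ φ) ≫ (α_ A A V).inv ≫ (μ ▷ V))
      = (α_ A A V).inv ≫ ((A ⊗ A) ◁ φ) ≫ (μ ▷ (A ⊗ V)) ≫ (α_ A A V).inv ≫ (μ ▷ V) := by
        rw [← whisker_exchange_assoc]
    _ = (A ◁ (A ◁ φ)) ≫ (α_ A A (A ⊗ V)).inv ≫ (α_ (A ⊗ A) A V).inv ≫
        (((μ ▷ A) ≫ μ) ▷ V) := by
        simp only [comp_whiskerRight]; monoidal
    _ = (A ◁ (A ◁ φ)) ≫ (α_ A A (A ⊗ V)).inv ≫ (α_ (A ⊗ A) A V).inv ≫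
        (((α_ A A A).hom ≫ (A ◁ μ) ≫ μ) ▷ V) := by rw [hassoc]
    _ = (A ◁ ((A ◁ φ) ≫ (α_ A A V).inv ≫ (μ ▷ V))) ≫ (α_ A A V).inv ≫ (μ ▷ V) := by
        simp only [comp_whiskerRight, MonoidalCategory.whiskerLeft_comp]; monoidal

lemma core {A V W : C} (η : 𝟙_ C ⟶ A) (μ : A ⊗ A ⟶ A)
    (ψV : V ⊗ A ⟶ A ⊗ V) (ψW : W ⊗ A ⟶ A ⊗ W) (σW : W ⊗ W ⟶ A ⊗ W)
    (hψV : Compat μ ψV) (hnW : σW ≫ nabla η μ ψW = σW) :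
    ((V ◁ σW) ≫ (α_ V A W).inv ≫ (ψV ▷ W) ≫ (α_ A V W).hom) ≫
        nabla η μ (psi2 ψV ψW)
      = (V ◁ σW) ≫ (α_ V A W).inv ≫ (ψV ▷ W) ≫ (α_ A V W).hom := by
  set φW : W ⟶ A ⊗ W := (ρ_ W).inv ≫ (W ◁ η) ≫ ψW with hφW
  calc ((V ◁ σW) ≫ (α_ V A W).inv ≫ (ψV ▷ W) ≫ (α_ A V W).hom) ≫
        nabla η μ (psi2 ψV ψW)
      = (V ◁ σW) ≫ (α_ V A W).inv ≫ (ψV ▷ W) ≫ ((A ⊗ V) ◁ φW) ≫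
        (α_ (A ⊗ V) A W).inv ≫ ((α_ A V A).hom ▷ W) ≫ ((A ◁ ψV) ▷ W) ≫
        ((α_ A A V).inv ▷ W) ≫ ((μ ▷ V) ▷ W) ≫ (α_ A V W).hom := by
        rw [nabla_eq]; unfold psi2
        simp only [MonoidalCategory.whiskerLeft_comp, hφW]; monoidal
    _ = (V ◁ σW) ≫ (α_ V A W).inv ≫ ((V ⊗ A) ◁ φW) ≫ (ψV ▷ (A ⊗ W)) ≫
        (α_ (A ⊗ V) A W).inv ≫ ((α_ A V A).hom ▷ W) ≫ ((A ◁ ψV) ▷ W) ≫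
        ((α_ A A V).inv ▷ W) ≫ ((μ ▷ V) ▷ W) ≫ (α_ A V W).hom := by
        rw [whisker_exchange_assoc]
    _ = (V ◁ σW) ≫ (α_ V A W).inv ≫ ((V ⊗ A) ◁ φW) ≫ (α_ (V ⊗ A) A W).inv ≫
        ((((ψV ▷ A) ≫ (α_ A V A).hom ≫ (A ◁ ψV) ≫ (α_ A A V).inv ≫ (μ ▷ V))) ▷ W) ≫
        (α_ A V W).hom := by
        simp only [comp_whiskerRight]; monoidal
    _ = (V ◁ σW) ≫ (α_ V A W).inv ≫ ((V ⊗ A) ◁ φW) ≫ (α_ (V ⊗ A) A W).inv ≫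
        (((α_ V A A).hom ≫ (V ◁ μ) ≫ ψV) ▷ W) ≫ (α_ A V W).hom := by rw [hψV]
    _ = (V ◁ (σW ≫ (A ◁ φW) ≫ (α_ A A W).inv ≫ (μ ▷ W))) ≫
        (α_ V A W).inv ≫ (ψV ▷ W) ≫ (α_ A V W).hom := by
        simp only [comp_whiskerRight, MonoidalCategory.whiskerLeft_comp]; monoidal
    _ = (V ◁ σW) ≫ (α_ V A W).inv ≫ (ψV ▷ W) ≫ (α_ A V W).hom := by
        rw [← nabla_eq, hnW]


theorem statement4 {A V W : C} (η : 𝟙_ C ⟶ A) (μ : A ⊗ A ⟶ A)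
    (ψV : V ⊗ A ⟶ A ⊗ V) (σV : V ⊗ V ⟶ A ⊗ V)
    (ψW : W ⊗ A ⟶ A ⊗ W) (σW : W ⊗ W ⟶ A ⊗ W)
    (Δ : V ⊗ W ⟶ V ⊗ W) (τ : W ⊗ V ⟶ V ⊗ W)
    (hA : IsMonoid η μ) (hψV : Compat μ ψV) (hψW : Compat μ ψW)
    (htwV : Twisted μ ψV σV) (htwW : Twisted μ ψW σW)
    (hcoV : Cocycle μ ψV σV) (hcoW : Cocycle μ ψW σW)
    (hnV : Normalized η μ ψV σV) (hnW : Normalized η μ ψW σW)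
    (hΔ : IsLink η μ ψV ψW Δ)
    (hτ1 : TwistI ψV ψW τ) (hτ2 : TwistII μ ψV σV ψW σW τ)
    (hσ : SigmaCompat Δ (sigmaVW μ ψV σV σW τ)) :
    Normalized η μ (psiVW ψV ψW Δ) (sigmaVW μ ψV σV σW τ) := by
  unfold Normalized
  have hΔnab : nabla η μ (psiVW ψV ψW Δ) = (A ◁ Δ) ≫ nabla η μ (psi2 ψV ψW) :=
    nabla_whisker η μ (psi2 ψV ψW) Δ
  have hfact : sigmaVW μ ψV σV σW τ
      = ((α_ V W (V ⊗ W)).hom ≫ (V ◁ (α_ W V W).inv) ≫ (V ◁ (τ ▷ W)) ≫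
          (V ◁ (α_ V W W).hom) ≫ (α_ V V (W ⊗ W)).inv ≫ (σV ▷ (W ⊗ W)) ≫
          (α_ A V (W ⊗ W)).hom) ≫
        (A ◁ ((V ◁ σW) ≫ (α_ V A W).inv ≫ (ψV ▷ W) ≫ (α_ A V W).hom)) ≫
        (α_ A A (V ⊗ W)).inv ≫ (μ ▷ (V ⊗ W)) := by
    unfold sigmaVW muPart
    simp only [MonoidalCategory.tensorHom_def, MonoidalCategory.whiskerLeft_comp, comp_whiskerRight]
    monoidal
  have hσ3 : sigmaVW μ ψV σV σW τ ≫ (A ◁ Δ) = sigmaVW μ ψV σV σW τ := (hσ.2.2).symm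
  calc sigmaVW μ ψV σV σW τ ≫ nabla η μ (psiVW ψV ψW Δ)
      = (sigmaVW μ ψV σV σW τ ≫ (A ◁ Δ)) ≫ nabla η μ (psi2 ψV ψW) := by
        rw [hΔnab, Category.assoc]
    _ = sigmaVW μ ψV σV σW τ ≫ nabla η μ (psi2 ψV ψW) := by rw [hσ3]
    _ = ((α_ V W (V ⊗ W)).hom ≫ (V ◁ (α_ W V W).inv) ≫ (V ◁ (τ ▷ W)) ≫
          (V ◁ (α_ V W W).hom) ≫ (α_ V V (W ⊗ W)).inv ≫ (σV ▷ (W ⊗ W)) ≫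
          (α_ A V (W ⊗ W)).hom) ≫
        (A ◁ ((V ◁ σW) ≫ (α_ V A W).inv ≫ (ψV ▷ W) ≫ (α_ A V W).hom)) ≫
        ((α_ A A (V ⊗ W)).inv ≫ (μ ▷ (V ⊗ W)) ≫ nabla η μ (psi2 ψV ψW)) := by
        rw [hfact]; simp only [Category.assoc]
    _ = ((α_ V W (V ⊗ W)).hom ≫ (V ◁ (α_ W V W).inv) ≫ (V ◁ (τ ▷ W)) ≫
          (V ◁ (α_ V W W).hom) ≫ (α_ V V (W ⊗ W)).inv ≫ (σV ▷ (W ⊗ W)) ≫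
          (α_ A V (W ⊗ W)).hom) ≫
        (A ◁ (((V ◁ σW) ≫ (α_ V A W).inv ≫ (ψV ▷ W) ≫ (α_ A V W).hom) ≫
              nabla η μ (psi2 ψV ψW))) ≫
        (α_ A A (V ⊗ W)).inv ≫ (μ ▷ (V ⊗ W)) := by
        rw [mu_nabla η μ (psi2 ψV ψW) hA.2.2]
        simp only [MonoidalCategory.whiskerLeft_comp, Category.assoc]
    _ = ((α_ V W (V ⊗ W)).hom ≫ (V ◁ (α_ W V W).inv) ≫ (V ◁ (τ ▷ W)) ≫
          (V ◁ (α_ V W W).hom) ≫ (α_ V V (W ⊗ W)).inv ≫ (σV ▷ (W ⊗ W)) ≫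
          (α_ A V (W ⊗ W)).hom) ≫
        (A ◁ ((V ◁ σW) ≫ (α_ V A W).inv ≫ (ψV ▷ W) ≫ (α_ A V W).hom)) ≫
        (α_ A A (V ⊗ W)).inv ≫ (μ ▷ (V ⊗ W)) := by
        rw [core η μ ψV ψW σW hψV hnW]
    _ = sigmaVW μ ψV σV σW τ := hfact.symm

end IteratedWCP
end
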